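/- Let D ∈ ℕ and T ≥ 2 with D = ⌊T/2⌋, and let F_D(θ) = (sin(πDθ)/(D sin(πθ)))^2 be the Fejér kernel (extended by continuity at integers θ). If θ ∈ ℝ satisfies 0 < ‖θ‖ ≤ 1/T, where ‖θ‖ is the distance from θ to the nearest integer, then F_D(θ) ≥ 4/π^2. -/

import Mathlib

open Real Finset

lemma aux_abs_exp_sub_one (x : ℝ) :
    ‖Complex.exp (x * Complex.I) - 1‖ = 2 * |Real.sin (x / 2)| := by
  have h1 : Complex.exp (x * Complex.I) - 1
      = Complex.ofReal (Real.cos x - 1) + Complex.ofReal (Real.sin x) * Complex.I := by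
    rw [Complex.exp_mul_I]
    push_cast [Complex.ofReal_cos, Complex.ofReal_sin]
    ring
  rw [h1, Complex.norm_add_mul_I]
  have hc : Real.cos x = Real.cos (2 * (x / 2)) := by ring_nf
  have h2 : (Real.cos x - 1) ^ 2 + Real.sin x ^ 2 = (2 * |Real.sin (x / 2)|) ^ 2 := by
    have hp := Real.sin_sq_add_cos_sq x
    have hp2 := Real.sin_sq_add_cos_sq (x / 2)
    have hd : Real.cos x = Real.cos (x / 2) ^ 2 - Real.sin (x / 2) ^ 2 := by
      rw [hc, Real.cos_two_mul']
    rw [mul_pow, sq_abs]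
    nlinarith
  rw [h2, Real.sqrt_sq (by positivity)]

lemma aux_abs_sin_shift (y : ℝ) (n : ℤ) : |Real.sin (y + n * Real.pi)| = |Real.sin y| := by
  rw [Real.sin_add_int_mul_pi, abs_mul]
  rcases Int.even_or_odd n with h | h
  · rw [h.neg_one_zpow]; simp
  · rw [Odd.neg_one_zpow h]; simp

theorem stmt_12 (T : ℝ) (hT : 2 ≤ T) (D : ℕ) (hD : D = ⌊T / 2⌋₊)
    (θ : ℝ) (h0 : 0 < |θ - round θ|) (h1 : |θ - round θ| ≤ 1 / T) :
    4 / Real.pi ^ 2 ≤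
      ((D : ℝ) ^ 2)⁻¹ *
        ‖∑ d ∈ Finset.Icc 1 D,
          Complex.exp (2 * Real.pi * Complex.I * d * θ)‖ ^ 2 := by
  have hπ := Real.pi_pos
  set k : ℤ := round θ with hk
  set ε : ℝ := θ - k with hε
  set δ : ℝ := |ε| with hδ
  have hT0 : (0 : ℝ) < T := by linarith
  have hD1 : 1 ≤ D := by
    rw [hD]
    exact Nat.le_floor (by push_cast; linarith)
  have hD0 : (0 : ℝ) < D := by exact_mod_cast hD1
  have hDT : (D : ℝ) ≤ T / 2 := by rw [hD]; exact Nat.floor_le (by linarith)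
  have hδ0 : 0 < δ := h0
  have hδT : δ ≤ 1 / T := h1
  have hδ2 : δ ≤ 1 / 2 := hδT.trans (by
    rw [div_le_div_iff₀ hT0 (by norm_num)]; linarith)
  have hDδ : (D : ℝ) * δ ≤ 1 / 2 := by
    calc (D : ℝ) * δ ≤ (T / 2) * (1 / T) :=
          mul_le_mul hDT hδT (le_of_lt hδ0) (by linarith)
      _ = 1 / 2 := by field_simp
  -- the geometric sum
  set z : ℂ := Complex.exp (2 * Real.pi * θ * Complex.I) with hz
  have hz_ne : z ≠ 1 := by
    intro h
    rw [hz, Complex.exp_eq_one_iff] at h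
    obtain ⟨n, hn⟩ := h
    have h2 : ((2 * Real.pi * θ : ℝ) : ℂ) * Complex.I
        = ((2 * Real.pi * n : ℝ) : ℂ) * Complex.I := by
      push_cast
      linear_combination hn
    have h3 : (2 * Real.pi * θ : ℝ) = 2 * Real.pi * n := by
      have := mul_right_cancel₀ Complex.I_ne_zero h2
      exact_mod_cast this
    have h2pi : (2 * Real.pi) ≠ 0 := ne_of_gt (by positivity)
    have hθn : θ = (n : ℝ) := mul_left_cancel₀ h2pi (by linear_combination h3)
    have hd0 : δ = 0 := by
      rw [hδ, hε, hk, hθn]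
      simp
    linarith
  have hterm : ∀ d : ℕ, Complex.exp (2 * Real.pi * Complex.I * d * θ) = z ^ d := by
    intro d
    rw [hz, ← Complex.exp_nat_mul]
    congr 1
    push_cast
    ring
  have hsum : (∑ d ∈ Finset.Icc 1 D, Complex.exp (2 * Real.pi * Complex.I * d * θ))
      = z * ((z ^ D - 1) / (z - 1)) := by
    calc (∑ d ∈ Finset.Icc 1 D, Complex.exp (2 * Real.pi * Complex.I * d * θ))
        = ∑ d ∈ Finset.Icc 1 D, z ^ d := Finset.sum_congr rfl (fun d _ => hterm d)
      _ = ∑ i ∈ Finset.range D, z ^ (1 + i) := by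
          rw [← Finset.Ico_add_one_right_eq_Icc, Finset.sum_Ico_eq_sum_range, Nat.add_sub_cancel]
      _ = z * ∑ i ∈ Finset.range D, z ^ i := by
          rw [Finset.mul_sum]
          exact Finset.sum_congr rfl (fun i _ => by rw [pow_add, pow_one])
      _ = z * ((z ^ D - 1) / (z - 1)) := by rw [geom_sum_eq hz_ne]
  have habs_z : ‖z‖ = 1 := by
    rw [hz, Complex.norm_exp]
    norm_num
  have hzD : z ^ D = Complex.exp ((2 * Real.pi * D * θ : ℝ) * Complex.I) := by
    rw [hz, ← Complex.exp_nat_mul]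
    congr 1
    push_cast
    ring
  have hz1 : z = Complex.exp ((2 * Real.pi * θ : ℝ) * Complex.I) := by
    rw [hz]; congr 1; push_cast; ring
  have habs_num : ‖z ^ D - 1‖ = 2 * |Real.sin (Real.pi * D * θ)| := by
    rw [hzD, aux_abs_exp_sub_one]
    congr 2
    ring
  have habs_den : ‖z - 1‖ = 2 * |Real.sin (Real.pi * θ)| := by
    rw [hz1, aux_abs_exp_sub_one]
    congr 2
    ring
  -- sin estimates
  have hsinδ_nonneg : 0 ≤ Real.sin (Real.pi * δ) :=
    Real.sin_nonneg_of_nonneg_of_le_pi (by positivity) (by nlinarith)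
  have hsinDδ_nonneg : 0 ≤ Real.sin (Real.pi * D * δ) :=
    Real.sin_nonneg_of_nonneg_of_le_pi (by positivity) (by nlinarith)
  have hodd : ∀ c : ℝ, |Real.sin (c * ε)| = |Real.sin (c * δ)| := by
    intro c
    rcases abs_cases ε with ⟨he, _⟩ | ⟨he, _⟩
    · rw [hδ, he]
    · rw [hδ, he, mul_neg, Real.sin_neg, abs_neg]
  have hsin_den : |Real.sin (Real.pi * θ)| = Real.sin (Real.pi * δ) := by
    have h1' : Real.pi * θ = Real.pi * ε + k * Real.pi := by rw [hε]; push_cast; ring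
    rw [h1', aux_abs_sin_shift, hodd, abs_of_nonneg hsinδ_nonneg]
  have hsin_num : |Real.sin (Real.pi * D * θ)| = Real.sin (Real.pi * D * δ) := by
    have h1' : Real.pi * D * θ = (Real.pi * D) * ε + (D * k : ℤ) * Real.pi := by
      rw [hε]; push_cast; ring
    rw [h1', aux_abs_sin_shift, hodd, abs_of_nonneg]
    · rw [mul_assoc] at hsinDδ_nonneg ⊢
      exact hsinDδ_nonneg
  have hden_pos : 0 < Real.sin (Real.pi * δ) := by
    apply Real.sin_pos_of_pos_of_lt_pi (by positivity)
    nlinarith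
  have hden_le : Real.sin (Real.pi * δ) ≤ Real.pi * δ :=
    Real.sin_le (by positivity)
  have hnum_ge : 2 * (D : ℝ) * δ ≤ Real.sin (Real.pi * D * δ) := by
    have hkey := Real.mul_le_sin (x := Real.pi * D * δ) (by positivity) (by nlinarith)
    calc 2 * (D : ℝ) * δ = 2 / Real.pi * (Real.pi * D * δ) := by
          field_simp
      _ ≤ Real.sin (Real.pi * D * δ) := hkey
  -- combine
  have habs_S : ‖∑ d ∈ Finset.Icc 1 D,
      Complex.exp (2 * Real.pi * Complex.I * d * θ)‖
      = Real.sin (Real.pi * D * δ) / Real.sin (Real.pi * δ) := by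
    rw [hsum, norm_mul, habs_z, one_mul, norm_div, habs_num, habs_den,
      hsin_num, hsin_den, mul_div_mul_left _ _ (by norm_num : (2:ℝ) ≠ 0)]
  have hA : 2 * (D : ℝ) / Real.pi ≤ ‖∑ d ∈ Finset.Icc 1 D,
      Complex.exp (2 * Real.pi * Complex.I * d * θ)‖ := by
    rw [habs_S, div_le_div_iff₀ hπ hden_pos]
    calc 2 * (D : ℝ) * Real.sin (Real.pi * δ) ≤ 2 * D * (Real.pi * δ) :=
          mul_le_mul_of_nonneg_left hden_le (by positivity)
      _ = 2 * D * δ * Real.pi := by ring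
      _ ≤ Real.sin (Real.pi * D * δ) * Real.pi :=
          mul_le_mul_of_nonneg_right hnum_ge (le_of_lt hπ)
  have hA0 : 0 ≤ 2 * (D : ℝ) / Real.pi := by positivity
  have hsq : (2 * (D : ℝ) / Real.pi) ^ 2 ≤ ‖∑ d ∈ Finset.Icc 1 D,
      Complex.exp (2 * Real.pi * Complex.I * d * θ)‖ ^ 2 :=
    pow_le_pow_left₀ hA0 hA 2
  calc 4 / Real.pi ^ 2 = ((D : ℝ) ^ 2)⁻¹ * (2 * (D : ℝ) / Real.pi) ^ 2 := by
        field_simp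
        ring
    _ ≤ ((D : ℝ) ^ 2)⁻¹ * ‖∑ d ∈ Finset.Icc 1 D,
          Complex.exp (2 * Real.pi * Complex.I * d * θ)‖ ^ 2 :=
        mul_le_mul_of_nonneg_left hsq (by positivity)
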